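/- Let M be a diamond with atom set A. For any vector x : [n] × A → ℝ and any tuples a, b ∈ M^n, x(a) + x(b) ≤ x(a ⊓ b) + x(a ⊔ b), i.e., the function y ↦ x(y) is supermodular on M^n. -/

import Mathlib

set_option linter.unreachableTactic false
set_option linter.unusedTactic false
set_option linter.unusedVariables false

inductive Dia (A : Type) : Type where
  | bot : Dia A
  | atom : A → Dia A
  | top : Dia A
  deriving DecidableEq

namespace Dia

variable {A : Type} [DecidableEq A]

instance : Lattice (Dia A) where
  le x y := x = bot ∨ y = top ∨ x = y
  le_refl x := Or.inr (Or.inr rfl)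
  le_trans x y z hxy hyz := by
    rcases hxy with h | h | h <;> rcases hyz with h' | h' | h' <;> simp_all
  le_antisymm x y hxy hyx := by
    rcases hxy with h | h | h <;> rcases hyx with h' | h' | h' <;> simp_all
  sup x y := if x = bot then y else if y = bot then x else if x = y then x else top
  inf x y := if x = top then y else if y = top then x else if x = y then x else bot
  le_sup_left x y := by
    try dsimp only
    split_ifs <;> (try simp_all) <;> (try split_ifs) <;> (try simp_all)
  le_sup_right x y := by
    try dsimp only
    split_ifs <;> (try simp_all) <;> (try split_ifs) <;> (try simp_all)
  sup_le x y z hxz hyz := by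
    try dsimp only
    rcases hxz with h | h | h <;> rcases hyz with h' | h' | h' <;> split_ifs <;> (try simp_all) <;> (try split_ifs) <;> (try simp_all)
  inf_le_left x y := by
    try dsimp only
    split_ifs <;> (try simp_all) <;> (try split_ifs) <;> (try simp_all)
  inf_le_right x y := by
    try dsimp only
    split_ifs <;> (try simp_all) <;> (try split_ifs) <;> (try simp_all)
  le_inf x y z hxy hxz := by
    try dsimp only
    rcases hxy with h | h | h <;> rcases hxz with h' | h' | h' <;> split_ifs <;> (try simp_all) <;> (try split_ifs) <;> (try simp_all)

instance : BoundedOrder (Dia A) where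
  top := top
  bot := bot
  le_top x := Or.inr (Or.inl rfl)
  bot_le x := Or.inl rfl

def drank : Dia A → ℕ
  | bot => 0
  | atom _ => 1
  | top => 2

noncomputable def gval (v : A → ℝ) : Dia A → ℝ
  | bot => 0
  | atom a => v a
  | top => sSup {r : ℝ | ∃ a a' : A, a ≠ a' ∧ r = v a + v a'}

end Dia

variable {A : Type} [DecidableEq A] {n : ℕ}

noncomputable def evalD (x : Fin n → A → ℝ) (y : Fin n → Dia A) : ℝ :=
  ∑ i, Dia.gval (x i) (y i)

def Submod (f : (Fin n → Dia A) → ℝ) : Prop :=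
  ∀ a b, f (a ⊓ b) + f (a ⊔ b) ≤ f a + f b

def InP (f : (Fin n → Dia A) → ℝ) (x : Fin n → A → ℝ) : Prop :=
  ∀ y, evalD x y ≤ f y

def UnifiedRow (v : A → ℝ) : Prop :=
  ∃ p : A, (∀ a b : A, a ≠ p → b ≠ p → v a = v b) ∧ ∀ a, v a ≤ v p

def Unified (x : Fin n → A → ℝ) : Prop := ∀ i, UnifiedRow (x i)


lemma gval_key [Fintype A] (v : A → ℝ) (p q : Dia A) :
    Dia.gval v p + Dia.gval v q ≤ Dia.gval v (p ⊓ q) + Dia.gval v (p ⊔ q) := by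
  have hfin : ({r : ℝ | ∃ a a' : A, a ≠ a' ∧ r = v a + v a'}).Finite := by
    apply Set.Finite.subset (Set.finite_range (fun pr : A × A => v pr.1 + v pr.2))
    rintro r ⟨a, a', _, rfl⟩
    exact ⟨(a, a'), rfl⟩
  cases p with
  | bot =>
    have h1 : (Dia.bot : Dia A) ⊓ q = Dia.bot := by
      apply inf_eq_left.mpr; exact Or.inl rfl
    have h2 : (Dia.bot : Dia A) ⊔ q = q := by
      apply sup_eq_right.mpr; exact Or.inl rfl
    rw [h1, h2]
  | top =>
    have h1 : (Dia.top : Dia A) ⊓ q = q := by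
      apply inf_eq_right.mpr; exact Or.inr (Or.inl rfl)
    have h2 : (Dia.top : Dia A) ⊔ q = Dia.top := by
      apply sup_eq_left.mpr; exact Or.inr (Or.inl rfl)
    rw [h1, h2]; ring_nf; rfl
  | atom a =>
    cases q with
    | bot =>
      have h1 : (Dia.atom a : Dia A) ⊓ Dia.bot = Dia.bot := by
        apply inf_eq_right.mpr; exact Or.inl rfl
      have h2 : (Dia.atom a : Dia A) ⊔ Dia.bot = Dia.atom a := by
        apply sup_eq_left.mpr; exact Or.inl rfl
      rw [h1, h2]; ring_nf; rfl
    | top =>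
      have h1 : (Dia.atom a : Dia A) ⊓ Dia.top = Dia.atom a := by
        apply inf_eq_left.mpr; exact Or.inr (Or.inl rfl)
      have h2 : (Dia.atom a : Dia A) ⊔ Dia.top = Dia.top := by
        apply sup_eq_right.mpr; exact Or.inr (Or.inl rfl)
      rw [h1, h2]
    | atom a' =>
      by_cases hEq : a = a'
      · subst hEq
        have h1 : (Dia.atom a : Dia A) ⊓ Dia.atom a = Dia.atom a := inf_idem _
        have h2 : (Dia.atom a : Dia A) ⊔ Dia.atom a = Dia.atom a := sup_idem _
        rw [h1, h2]
      · have h1 : (Dia.atom a : Dia A) ⊓ Dia.atom a' = Dia.bot := by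
          show (if _ then _ else _) = _
          simp [hEq]
        have h2 : (Dia.atom a : Dia A) ⊔ Dia.atom a' = Dia.top := by
          show (if _ then _ else _) = _
          simp [hEq]
        rw [h1, h2]
        have : v a + v a' ≤ Dia.gval v Dia.top := by
          apply le_csSup hfin.bddAbove
          exact ⟨a, a', hEq, rfl⟩
        simpa [Dia.gval] using this

/-- the evaluation map y ↦ x(y) is supermodular on M^n. -/
theorem stmt3 [Fintype A] (hA : 3 ≤ Fintype.card A)
    (x : Fin n → A → ℝ) (a b : Fin n → Dia A) :
    evalD x a + evalD x b ≤ evalD x (a ⊓ b) + evalD x (a ⊔ b) := by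
  unfold evalD
  rw [← Finset.sum_add_distrib, ← Finset.sum_add_distrib]
  apply Finset.sum_le_sum
  intro i _
  exact gval_key (x i) (a i) (b i)
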